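/- Let 0 < θ < ε be reals and q, ℓ positive integers. Then there exists a positive integer k such that: for all probability spaces (Ω_1,μ_1), …, (Ω_q,μ_q) and sequences (A^i_j)_{j=1}^{k} of measurable sets in Ω_i with μ_i(A^i_j) ≥ ε for all i ∈ [q] and j ∈ [k], there exists a set L ⊆ [k] of size ℓ with μ_i(⋂_{j∈L} A^i_j) ≥ θ^ℓ for every i ∈ [q]. -/

import Mathlib

open MeasureTheory Finset
open scoped ENNReal

private lemma aux_pow_le (k : ℕ) : ∀ ℓ : ℕ, k ^ ℓ ≤ k.descFactorial ℓ + ℓ * ℓ * k ^ (ℓ - 1)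
  | 0 => by simp
  | (n + 1) => by
    have ih := aux_pow_le k n
    have h2 : k * k.descFactorial n ≤ k.descFactorial (n + 1) + n * k.descFactorial n := by
      rw [Nat.descFactorial_succ]
      calc k * k.descFactorial n ≤ ((k - n) + n) * k.descFactorial n :=
            Nat.mul_le_mul_right _ le_tsub_add
        _ = (k - n) * k.descFactorial n + n * k.descFactorial n := by ring
    have h3 : k.descFactorial n ≤ k ^ n := Nat.descFactorial_le_pow k n
    have h4 : n * n * (k * k ^ (n - 1)) ≤ n * n * k ^ n := by
      cases n with
      | zero => simp
      | succ m =>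
        rw [Nat.succ_sub_one, ← pow_succ']
    calc k ^ (n + 1) = k * k ^ n := by ring
      _ ≤ k * (k.descFactorial n + n * n * k ^ (n - 1)) := Nat.mul_le_mul_left _ ih
      _ = k * k.descFactorial n + n * n * (k * k ^ (n - 1)) := by ring
      _ ≤ (k.descFactorial (n + 1) + n * k.descFactorial n) + n * n * k ^ n :=
            Nat.add_le_add h2 h4
      _ ≤ k.descFactorial (n + 1) + (n * k ^ n + n * n * k ^ n) := by
            have := Nat.mul_le_mul_left n h3; omega
      _ ≤ k.descFactorial (n + 1) + (n + 1) * (n + 1) * k ^ n := by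
            have : n * k ^ n + n * n * k ^ n ≤ (n + 1) * (n + 1) * k ^ n := by
              have : n + n * n ≤ (n + 1) * (n + 1) := by nlinarith
              calc n * k ^ n + n * n * k ^ n = (n + n * n) * k ^ n := by ring
                _ ≤ (n + 1) * (n + 1) * k ^ n := Nat.mul_le_mul_right _ this
            omega
      _ = k.descFactorial (n + 1) + (n + 1) * (n + 1) * k ^ (n + 1 - 1) := by simp

private lemma aux_ramsey : ∀ r m : ℕ, ∃ N : ℕ,
    ∀ (α : Type) [LinearOrder α] (V : Finset α) (χ : Finset α → Bool),
      N ≤ V.card → ∃ H : Finset α, H ⊆ V ∧ H.card = m ∧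
        ∃ b : Bool, ∀ s ⊆ H, s.card = r → χ s = b := by
  intro r
  induction r with
  | zero =>
    intro m
    refine ⟨m, fun α _ V χ hV => ?_⟩
    obtain ⟨H, hHV, hcard⟩ := Finset.exists_subset_card_eq hV
    exact ⟨H, hHV, hcard, χ ∅, fun s _ hs => by rw [Finset.card_eq_zero.mp hs]⟩
  | succ r IH =>
    have claim : ∀ t : ℕ, ∃ N : ℕ,
        ∀ (α : Type) [LinearOrder α] (V : Finset α) (χ : Finset α → Bool),
          N ≤ V.card → ∃ W : Finset α, W ⊆ V ∧ W.card = t ∧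
            ∃ c : α → Bool, ∀ s ⊆ W, s.card = r + 1 → ∀ hs : s.Nonempty,
              χ s = c (s.min' hs) := by
      intro t
      induction t with
      | zero =>
        refine ⟨0, fun α _ V χ _ => ⟨∅, empty_subset V, rfl, fun _ => true, ?_⟩⟩
        intro s hsub hcard hne
        rw [Finset.subset_empty.mp hsub] at hne
        exact absurd rfl hne.ne_empty
      | succ t IHt =>
        classical
        obtain ⟨Nt, hNt⟩ := IHt
        obtain ⟨NR, hNR⟩ := IH Nt
        refine ⟨NR + 1, fun α _ V χ hV => ?_⟩
        have hVne : V.Nonempty := Finset.card_pos.mp (by omega)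
        set v := V.min' hVne with hv
        have hvV : v ∈ V := V.min'_mem hVne
        have hV' : NR ≤ (V.erase v).card := by
          rw [Finset.card_erase_of_mem hvV]; omega
        obtain ⟨H, hHV', hHcard, b, hb⟩ := hNR α (V.erase v) (fun s => χ (insert v s)) hV'
        obtain ⟨W', hW'H, hW'card, c', hc'⟩ := hNt α H χ (le_of_eq hHcard.symm)
        have hvW' : v ∉ W' := fun hmem => (Finset.mem_erase.mp (hHV' (hW'H hmem))).1 rfl
        refine ⟨insert v W', ?_, ?_, (fun u => if u = v then b else c' u), ?_⟩
        · exact Finset.insert_subset hvV ((hW'H.trans hHV').trans (Finset.erase_subset _ _))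
        · rw [Finset.card_insert_of_notMem hvW', hW'card]
        · intro s hsW hscard hne
          by_cases hvs : v ∈ s
          · have hmin : s.min' hne = v := by
              refine le_antisymm (Finset.min'_le s v hvs) ?_
              exact V.min'_le (s.min' hne) (by
                have := hsW (s.min'_mem hne)
                rcases Finset.mem_insert.mp this with h | h
                · rw [h]; exact hvV
                · exact (Finset.erase_subset _ _) (hHV' (hW'H h)))
            have hcv : (fun u => if u = v then b else c' u) (s.min' hne) = b := by
              rw [hmin]; simp
            rw [hcv]
            have hserase : s.erase v ⊆ H := by
              intro x hx
              obtain ⟨hxv, hxs⟩ := Finset.mem_erase.mp hx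
              rcases Finset.mem_insert.mp (hsW hxs) with h | h
              · exact absurd h hxv
              · exact hW'H h
            have hcard' : (s.erase v).card = r := by
              rw [Finset.card_erase_of_mem hvs, hscard]
              omega
            have hres := hb (s.erase v) hserase hcard'
            rwa [Finset.insert_erase hvs] at hres
          · have hsW' : s ⊆ W' := fun x hx =>
              (Finset.mem_insert.mp (hsW hx)).resolve_left (fun h => hvs (h ▸ hx))
            have hmv : s.min' hne ≠ v := fun h => hvs (h ▸ s.min'_mem hne)
            have hcv : (fun u => if u = v then b else c' u) (s.min' hne) = c' (s.min' hne) := by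
              simp [hmv]
            rw [hcv]
            exact hc' s hsW' hscard hne
    intro m
    classical
    obtain ⟨Nc, hNc⟩ := claim (2 * m)
    refine ⟨Nc, fun α _ V χ hV => ?_⟩
    obtain ⟨W, hWV, hWcard, c, hc⟩ := hNc α V χ hV
    have hsplit := Finset.card_filter_add_card_filter_not
      (s := W) (p := fun u => c u = true)
    rw [hWcard] at hsplit
    have hex : ∃ b : Bool, m ≤ (W.filter (fun u => c u = b)).card := by
      by_cases h : m ≤ (W.filter (fun u => c u = true)).card
      · exact ⟨true, h⟩
      · refine ⟨false, ?_⟩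
        have heq : (W.filter (fun u => ¬ (c u = true))) = (W.filter (fun u => c u = false)) := by
          apply Finset.filter_congr; intro x _; simp
        rw [heq] at hsplit
        omega
    obtain ⟨b, hbcard⟩ := hex
    obtain ⟨H, hHf, hHcard⟩ := Finset.exists_subset_card_eq hbcard
    have hHW : H ⊆ W := hHf.trans (Finset.filter_subset _ _)
    refine ⟨H, hHW.trans hWV, hHcard, b, ?_⟩
    intro s hsH hscard
    have hne : s.Nonempty := Finset.card_pos.mp (by omega)
    rw [hc s (hsH.trans hHW) hscard hne]
    have hmem : s.min' hne ∈ H := hsH (s.min'_mem hne)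
    exact (Finset.mem_filter.mp (hHf hmem)).2

private lemma aux_biInter_map {β γ Ω : Type*} (e : β ↪ γ) (L : Finset β) (f : γ → Set Ω) :
    ⋂ j ∈ L.map e, f j = ⋂ j ∈ L, f (e j) := by
  ext x
  simp only [Set.mem_iInter, Finset.mem_map]
  constructor
  · intro h a ha
    exact h (e a) ⟨a, ha, rfl⟩
  · rintro h j ⟨a, ha, rfl⟩
    exact h a ha

private lemma aux_single (ε θ : ℝ) (hθ : 0 < θ) (hθε : θ < ε) (ℓ : ℕ) (hℓ : 0 < ℓ)
    (k : ℕ) (hkℓ : ℓ ≤ k) (hk2 : (ℓ * ℓ : ℝ) < (ε ^ ℓ - θ ^ ℓ) * k)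
    {Ω : Type} [MeasurableSpace Ω] (μ : Measure Ω) [IsProbabilityMeasure μ]
    (A : Fin k → Set Ω) (hA : ∀ j, MeasurableSet (A j))
    (hAε : ∀ j, ENNReal.ofReal ε ≤ μ (A j)) :
    ∃ L : Finset (Fin k), L.card = ℓ ∧ ENNReal.ofReal (θ ^ ℓ) ≤ μ (⋂ j ∈ L, A j) := by
  classical
  have hk0 : 0 < k := lt_of_lt_of_le hℓ hkℓ
  set P : Finset (Fin k) → Set Ω := fun T => ⋂ j, (if j ∈ T then A j else (A j)ᶜ) with hP
  have hPmeas : ∀ T, MeasurableSet (P T) := fun T =>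
    MeasurableSet.iInter fun j => by
      by_cases h : j ∈ T
      · simp only [hP, if_pos h]; exact hA j
      · simp only [hP, if_neg h]; exact (hA j).compl
  have hPmem : ∀ T x, x ∈ P T ↔ ∀ j, (x ∈ A j ↔ j ∈ T) := by
    intro T x
    simp only [hP, Set.mem_iInter]
    constructor
    · intro h j
      constructor
      · intro hxA
        by_contra hjT
        have := h j
        rw [if_neg hjT] at this
        exact this hxA
      · intro hjT
        have := h j
        rwa [if_pos hjT] at this
    · intro h j
      by_cases hjT : j ∈ T
      · rw [if_pos hjT]; exact (h j).mpr hjT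
      · rw [if_neg hjT]; intro hxA; exact hjT ((h j).mp hxA)
  have hkey : ∀ s : Finset (Fin k),
      (⋂ j ∈ s, A j) = ⋃ T ∈ univ.filter (fun T => s ⊆ T), P T := by
    intro s
    ext x
    simp only [Set.mem_iInter, Set.mem_iUnion, mem_filter, mem_univ, true_and]
    constructor
    · intro h
      refine ⟨univ.filter (fun j => x ∈ A j), fun j hj => mem_filter.mpr ⟨mem_univ j, h j hj⟩,
        (hPmem _ x).mpr fun j => ?_⟩
      simp [mem_filter]
    · rintro ⟨T, hsT, hxT⟩ j hj
      exact ((hPmem T x).mp hxT j).mpr (hsT hj)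
  have hdisj : ∀ u : Finset (Finset (Fin k)), Set.PairwiseDisjoint (↑u) P := by
    intro u T _ T' _ hne
    refine Set.disjoint_left.mpr fun x hxT hxT' => hne ?_
    exact Finset.ext fun j => ((hPmem T x).mp hxT j).symm.trans ((hPmem T' x).mp hxT' j)
  have hmeasure : ∀ s : Finset (Fin k),
      μ (⋂ j ∈ s, A j) = ∑ T ∈ univ.filter (fun T => s ⊆ T), μ (P T) := by
    intro s
    rw [hkey s]
    exact measure_biUnion_finset (hdisj _) (fun T _ => hPmeas T)
  have htotal : ∑ T : Finset (Fin k), μ (P T) = 1 := by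
    have h0 := hmeasure ∅
    rw [show univ.filter (fun T : Finset (Fin k) => ∅ ⊆ T) = univ from
      filter_true_of_mem fun _ _ => empty_subset _] at h0
    simpa using h0.symm
  set w : Finset (Fin k) → ℝ := fun T => (μ (P T)).toReal with hwdef
  have hw0 : ∀ T, 0 ≤ w T := fun T => ENNReal.toReal_nonneg
  have hwsum : ∑ T : Finset (Fin k), w T = 1 := by
    rw [← ENNReal.toReal_sum (fun T _ => measure_ne_top μ _), htotal, ENNReal.toReal_one]
  set g : Finset (Fin k) → ℝ := fun s => (μ (⋂ j ∈ s, A j)).toReal with hgdef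
  have hg : ∀ s, g s = ∑ T ∈ univ.filter (fun T => s ⊆ T), w T := by
    intro s
    rw [hgdef]
    simp only
    rw [hmeasure s, ENNReal.toReal_sum (fun T _ => measure_ne_top μ _)]
  have hg01 : ∀ s, g s ≤ 1 := fun s => by
    have : μ (⋂ j ∈ s, A j) ≤ 1 := prob_le_one
    calc g s ≤ (1 : ℝ≥0∞).toReal := ENNReal.toReal_mono ENNReal.one_ne_top this
      _ = 1 := ENNReal.toReal_one
  have hgnn : ∀ s, 0 ≤ g s := fun s => ENNReal.toReal_nonneg
  -- counting over tuples
  have hsum1 : ∑ c : Fin ℓ → Fin k, g (image c univ)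
      = ∑ T : Finset (Fin k), w T * (T.card : ℝ) ^ ℓ := by
    calc ∑ c : Fin ℓ → Fin k, g (image c univ)
        = ∑ c : Fin ℓ → Fin k, ∑ T : Finset (Fin k),
            if image c univ ⊆ T then w T else 0 := by
          refine Finset.sum_congr rfl fun c _ => ?_
          rw [hg, Finset.sum_filter]
      _ = ∑ T : Finset (Fin k), ∑ c : Fin ℓ → Fin k,
            if image c univ ⊆ T then w T else 0 := Finset.sum_comm
      _ = ∑ T : Finset (Fin k), w T * (T.card : ℝ) ^ ℓ := by
          refine Finset.sum_congr rfl fun T _ => ?_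
          rw [← Finset.sum_filter, Finset.sum_const]
          have hfil : univ.filter (fun c : Fin ℓ → Fin k => image c univ ⊆ T)
              = Fintype.piFinset (fun _ : Fin ℓ => T) := by
            ext c
            simp [Fintype.mem_piFinset, Finset.image_subset_iff]
          rw [hfil, Fintype.card_piFinset]
          simp only [Finset.prod_const, Finset.card_univ, Fintype.card_fin]
          rw [nsmul_eq_mul, mul_comm]
          push_cast
          ring
  have hsum2 : ∑ j : Fin k, g {j} = ∑ T : Finset (Fin k), w T * (T.card : ℝ) := by
    calc ∑ j : Fin k, g {j}
        = ∑ j : Fin k, ∑ T : Finset (Fin k), if j ∈ T then w T else 0 := by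
          refine Finset.sum_congr rfl fun j _ => ?_
          rw [hg, Finset.sum_filter]
          simp [Finset.singleton_subset_iff]
      _ = ∑ T : Finset (Fin k), ∑ j : Fin k, if j ∈ T then w T else 0 := Finset.sum_comm
      _ = ∑ T : Finset (Fin k), w T * (T.card : ℝ) := by
          refine Finset.sum_congr rfl fun T _ => ?_
          rw [← Finset.sum_filter, Finset.sum_const]
          have : univ.filter (fun j : Fin k => j ∈ T) = T := by
            ext j; simp
          rw [this, nsmul_eq_mul, mul_comm]
  have hεnn : (0:ℝ) ≤ ε := le_of_lt (hθ.trans hθε)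
  have havg : (ε * k : ℝ) ≤ ∑ T : Finset (Fin k), w T * (T.card : ℝ) := by
    rw [← hsum2]
    have hone : ∀ j : Fin k, ε ≤ g {j} := by
      intro j
      have h1 : ENNReal.ofReal ε ≤ μ (⋂ i ∈ ({j} : Finset (Fin k)), A i) := by
        rw [Finset.set_biInter_singleton]
        exact hAε j
      calc ε = (ENNReal.ofReal ε).toReal := (ENNReal.toReal_ofReal hεnn).symm
        _ ≤ g {j} := ENNReal.toReal_mono (measure_ne_top μ _) h1
    calc ε * k = ∑ _j : Fin k, ε := by
          rw [Finset.sum_const, Finset.card_univ, Fintype.card_fin, nsmul_eq_mul, mul_comm]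
      _ ≤ ∑ j : Fin k, g {j} := Finset.sum_le_sum fun j _ => hone j
  have hJ : (∑ T : Finset (Fin k), w T * (T.card : ℝ)) ^ ℓ
      ≤ ∑ T : Finset (Fin k), w T * (T.card : ℝ) ^ ℓ :=
    Real.pow_arith_mean_le_arith_mean_pow univ w (fun T => (T.card : ℝ))
      (fun T _ => hw0 T) hwsum (fun T _ => Nat.cast_nonneg _) ℓ
  have hpow : (ε * k) ^ ℓ ≤ ∑ c : Fin ℓ → Fin k, g (image c univ) := by
    rw [hsum1]
    refine le_trans ?_ hJ
    exact pow_le_pow_left₀ (by positivity) havg ℓ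
  -- non-injective bound
  set injS := univ.filter (fun c : Fin ℓ → Fin k => Function.Injective c) with hinjS
  set ninjS := univ.filter (fun c : Fin ℓ → Fin k => ¬ Function.Injective c) with hninjS
  have hcInj : injS.card = k.descFactorial ℓ := by
    rw [hinjS, ← Fintype.card_subtype,
      Fintype.card_congr (Equiv.subtypeInjectiveEquivEmbedding (Fin ℓ) (Fin k)),
      Fintype.card_embedding_eq, Fintype.card_fin, Fintype.card_fin]
  have hcuniv : (univ : Finset (Fin ℓ → Fin k)).card = k ^ ℓ := by
    rw [Finset.card_univ]
    simp
  have hcsplit : injS.card + ninjS.card = k ^ ℓ := by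
    rw [hinjS, hninjS, Finset.card_filter_add_card_filter_not, hcuniv]
  have hninjcard : ninjS.card ≤ ℓ * ℓ * k ^ (ℓ - 1) := by
    have := aux_pow_le k ℓ
    omega
  have hSn : ∑ c ∈ ninjS, g (image c univ) ≤ ((ℓ * ℓ * k ^ (ℓ - 1) : ℕ) : ℝ) := by
    calc ∑ c ∈ ninjS, g (image c univ) ≤ ninjS.card • (1 : ℝ) :=
          Finset.sum_le_card_nsmul _ _ 1 fun c _ => hg01 _
      _ = (ninjS.card : ℝ) := by rw [nsmul_eq_mul, mul_one]
      _ ≤ _ := by exact_mod_cast hninjcard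
  have hsplitS : ∑ c ∈ injS, g (image c univ) + ∑ c ∈ ninjS, g (image c univ)
      = ∑ c : Fin ℓ → Fin k, g (image c univ) :=
    Finset.sum_filter_add_sum_filter_not univ _ _
  -- final inequality
  obtain ⟨n, rfl⟩ : ∃ n, ℓ = n + 1 := ⟨ℓ - 1, (Nat.succ_pred_eq_of_pos hℓ).symm⟩
  have hkpos : (0:ℝ) < (k:ℝ) := by exact_mod_cast hk0
  have hkn : (0:ℝ) < (k:ℝ) ^ n := pow_pos hkpos n
  have hSn' : ∑ c ∈ ninjS, g (image c univ) ≤ ((n:ℝ) + 1) * ((n:ℝ) + 1) * (k:ℝ) ^ n := by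
    refine hSn.trans (le_of_eq ?_)
    push_cast
    ring
  have hk2' : ((n:ℝ) + 1) * ((n:ℝ) + 1) < (ε ^ (n+1) - θ ^ (n+1)) * (k:ℝ) := by
    push_cast at hk2
    exact hk2
  have h2 : ((n:ℝ) + 1) * ((n:ℝ) + 1) * (k:ℝ) ^ n
      < ε ^ (n+1) * (k:ℝ) ^ (n+1) - θ ^ (n+1) * (k:ℝ) ^ (n+1) := by
    have h := mul_lt_mul_of_pos_right hk2' hkn
    have hksucc : (k:ℝ) ^ (n+1) = (k:ℝ) * (k:ℝ) ^ n := by ring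
    nlinarith [h]
  have hpow' : ε ^ (n+1) * (k:ℝ) ^ (n+1) ≤ ∑ c : Fin (n+1) → Fin k, g (image c univ) := by
    have := hpow
    rwa [mul_pow] at this
  have hfin : θ ^ (n+1) * (k:ℝ) ^ (n+1) < ∑ c ∈ injS, g (image c univ) := by
    linarith [hsplitS, hpow', hSn', h2]
  have hexists : ∃ c ∈ injS, θ ^ (n+1) < g (image c univ) := by
    by_contra hcon
    push_neg at hcon
    have hsle : ∑ c ∈ injS, g (image c univ) ≤ ∑ _c ∈ injS, θ ^ (n+1) :=
      Finset.sum_le_sum hcon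
    rw [Finset.sum_const] at hsle
    have hcardle : (injS.card : ℝ) ≤ (k:ℝ) ^ (n+1) := by
      have h1 : injS.card ≤ k ^ (n+1) := by omega
      calc (injS.card : ℝ) ≤ ((k ^ (n+1) : ℕ) : ℝ) := by exact_mod_cast h1
        _ = (k:ℝ) ^ (n+1) := by push_cast; ring
    have hθp : (0:ℝ) ≤ θ ^ (n+1) := by positivity
    rw [nsmul_eq_mul] at hsle
    nlinarith [hfin]
  obtain ⟨c, hcmem, hcg⟩ := hexists
  have hcinj : Function.Injective c := (Finset.mem_filter.mp hcmem).2
  refine ⟨image c univ, ?_, ?_⟩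
  · rw [Finset.card_image_of_injective _ hcinj, Finset.card_univ, Fintype.card_fin]
  · have h' : θ ^ (n+1) ≤ (μ (⋂ j ∈ image c univ, A j)).toReal := hcg.le
    exact ENNReal.ofReal_le_of_le_toReal h'

private lemma aux_A (ε θ : ℝ) (hθ : 0 < θ) (hθε : θ < ε) (ℓ : ℕ) (hℓ : 0 < ℓ) (m : ℕ) :
    ∃ k : ℕ, 0 < k ∧ ∀ (Ω : Type) [MeasurableSpace Ω] (μ : Measure Ω),
      IsProbabilityMeasure μ →
      ∀ (A : Fin k → Set Ω), (∀ j, MeasurableSet (A j)) →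
        (∀ j, ENNReal.ofReal ε ≤ μ (A j)) →
        ∃ M : Finset (Fin k), M.card = m ∧
          ∀ S ⊆ M, S.card = ℓ → ENNReal.ofReal (θ ^ ℓ) ≤ μ (⋂ j ∈ S, A j) := by
  classical
  have hδ : (0:ℝ) < ε ^ ℓ - θ ^ ℓ :=
    sub_pos.mpr (pow_lt_pow_left₀ hθε hθ.le (by omega))
  set k₀ : ℕ := max ℓ (⌈(ℓ * ℓ : ℝ) / (ε ^ ℓ - θ ^ ℓ)⌉₊ + 1) with hk₀def
  have hk₀ℓ : ℓ ≤ k₀ := le_max_left _ _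
  have hk₀2 : (ℓ * ℓ : ℝ) < (ε ^ ℓ - θ ^ ℓ) * k₀ := by
    have h1 : ((ℓ * ℓ : ℝ)) / (ε ^ ℓ - θ ^ ℓ) < (k₀ : ℝ) := by
      have h2 : (⌈(ℓ * ℓ : ℝ) / (ε ^ ℓ - θ ^ ℓ)⌉₊ + 1 : ℕ) ≤ k₀ := le_max_right _ _
      have h3 : ((⌈(ℓ * ℓ : ℝ) / (ε ^ ℓ - θ ^ ℓ)⌉₊ : ℝ) + 1) ≤ (k₀ : ℝ) := by
        exact_mod_cast h2
      have h4 := Nat.le_ceil ((ℓ * ℓ : ℝ) / (ε ^ ℓ - θ ^ ℓ))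
      linarith
    have := (div_lt_iff₀ hδ).mp h1
    linarith
  obtain ⟨N, hN⟩ := aux_ramsey ℓ (max m k₀)
  refine ⟨N + 1, Nat.succ_pos N, ?_⟩
  intro Ω _ μ hprob A hAmeas hAε
  haveI := hprob
  set χ : Finset (Fin (N+1)) → Bool :=
    fun s => if ENNReal.ofReal (θ ^ ℓ) ≤ μ (⋂ j ∈ s, A j) then true else false with hχ
  obtain ⟨H, _, hHcard, b, hb⟩ := hN (Fin (N+1)) univ χ (by simp)
  have hbtrue : b = true := by
    by_contra hbf
    obtain ⟨H', hH'H, hH'card⟩ :=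
      Finset.exists_subset_card_eq (s := H) (n := k₀) (hHcard ▸ le_max_right m k₀)
    set e := H'.orderEmbOfFin hH'card with he
    obtain ⟨L, hLcard, hLμ⟩ := aux_single ε θ hθ hθε ℓ hℓ k₀ hk₀ℓ hk₀2 μ
      (fun j => A (e j)) (fun j => hAmeas _) (fun j => hAε _)
    have hmap : ⋂ j ∈ L.map e.toEmbedding, A j = ⋂ j ∈ L, A (e j) :=
      aux_biInter_map e.toEmbedding L A
    have hsub : L.map e.toEmbedding ⊆ H := by
      intro x hx
      obtain ⟨j, _, rfl⟩ := Finset.mem_map.mp hx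
      exact hH'H (Finset.orderEmbOfFin_mem H' hH'card j)
    have hcard : (L.map e.toEmbedding).card = ℓ := by
      rw [Finset.card_map, hLcard]
    have hres := hb _ hsub hcard
    rw [hχ] at hres
    simp only at hres
    rw [if_pos (hmap ▸ hLμ)] at hres
    exact hbf hres.symm
  obtain ⟨M, hMH, hMcard⟩ := Finset.exists_subset_card_eq (s := H) (n := m) (hHcard ▸ le_max_left m k₀)
  refine ⟨M, hMcard, fun S hSM hScard => ?_⟩
  have hres := hb S (hSM.trans hMH) hScard
  rw [hbtrue, hχ] at hres
  simp only at hres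
  by_contra hcontra
  rw [if_neg hcontra] at hres
  exact Bool.false_ne_true hres

theorem stmt_11 (ε θ : ℝ) (hθ : 0 < θ) (hθε : θ < ε)
    (q ℓ : ℕ) (hq : 0 < q) (hℓ : 0 < ℓ) :
    ∃ k : ℕ, 0 < k ∧
      ∀ (Ω : Fin q → Type) [∀ i, MeasurableSpace (Ω i)]
        (μ : ∀ i, Measure (Ω i)),
        (∀ i, IsProbabilityMeasure (μ i)) →
        ∀ (A : ∀ i : Fin q, Fin k → Set (Ω i)),
          (∀ i j, MeasurableSet (A i j)) →
          (∀ i j, ENNReal.ofReal ε ≤ μ i (A i j)) →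
          ∃ L : Finset (Fin k), L.card = ℓ ∧
            ∀ i : Fin q, ENNReal.ofReal (θ ^ ℓ) ≤ μ i (⋂ j ∈ L, A i j) := by
  have main : ∀ q : ℕ, ∃ k : ℕ, 0 < k ∧
      ∀ (Ω : Fin q → Type) [∀ i, MeasurableSpace (Ω i)]
        (μ : ∀ i, Measure (Ω i)),
        (∀ i, IsProbabilityMeasure (μ i)) →
        ∀ (A : ∀ i : Fin q, Fin k → Set (Ω i)),
          (∀ i j, MeasurableSet (A i j)) →
          (∀ i j, ENNReal.ofReal ε ≤ μ i (A i j)) →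
          ∃ L : Finset (Fin k), L.card = ℓ ∧
            ∀ i : Fin q, ENNReal.ofReal (θ ^ ℓ) ≤ μ i (⋂ j ∈ L, A i j) := by
    intro q
    induction q with
    | zero =>
      refine ⟨ℓ, hℓ, fun Ω _ μ _ A _ _ => ⟨univ, ?_, fun i => i.elim0⟩⟩
      simp
    | succ q IH =>
      obtain ⟨k', hk', IHgood⟩ := IH
      obtain ⟨k, hk, hA⟩ := aux_A ε θ hθ hθε ℓ hℓ k'
      refine ⟨k, hk, ?_⟩
      intro Ω inst μ hprob A hmeas hbig
      obtain ⟨M, hMcard, hMgood⟩ :=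
        hA (Ω (Fin.last q)) (μ (Fin.last q)) (hprob _) (A (Fin.last q)) (hmeas _) (hbig _)
      set e := M.orderEmbOfFin hMcard with he
      obtain ⟨L', hL'card, hL'good⟩ := IHgood (fun i => Ω i.castSucc)
        (fun i => μ i.castSucc) (fun i => hprob _)
        (fun i j => A i.castSucc (e j)) (fun i j => hmeas _ _) (fun i j => hbig _ _)
      refine ⟨L'.map e.toEmbedding, by rw [Finset.card_map, hL'card], ?_⟩
      intro i
      refine Fin.lastCases ?_ ?_ i
      · refine hMgood _ ?_ (by rw [Finset.card_map, hL'card])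
        intro x hx
        obtain ⟨j, _, rfl⟩ := Finset.mem_map.mp hx
        exact Finset.orderEmbOfFin_mem M hMcard j
      · intro i'
        rw [aux_biInter_map]
        exact hL'good i'
  obtain ⟨k, hk, hgood⟩ := main q
  exact ⟨k, hk, hgood⟩
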